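/- Let d ≥ 3 and n ≥ 1. The group of diagonal matrices diag(λ_0, ..., λ_{n+1}) in PGL_{n+2}(C) preserving the Klein form x_0^{d-1}x_1 + x_1^{d-1}x_2 + ... + x_{n+1}^{d-1}x_0 up to scalar is cyclic of order m = ((d-1)^{n+2} - (-1)^{n+2})/d. -/

import Mathlib

/-- The homomorphism sending a scalar `c ∈ ℂˣ` to the constant diagonal tuple. -/
def constHom (k : ℕ) : ℂˣ →* (Fin k → ℂˣ) where
  toFun c := fun _ => c
  map_one' := rfl
  map_mul' _ _ := rfl

/-- The group of invertible diagonal scalings `diag(λ₀, ..., λ_{n+1})` preserving the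
Klein form `x₀^{d-1}x₁ + x₁^{d-1}x₂ + ⋯ + x_{n+1}^{d-1}x₀` up to a scalar `μ`,
i.e. those with `λᵢ^{d-1} λ_{i+1} = μ` for all `i` (indices mod `n+2`). -/
def KleinDiag (n d : ℕ) : Subgroup (Fin (n + 2) → ℂˣ) where
  carrier := {l | ∃ μ : ℂˣ, ∀ i, l i ^ (d - 1) * l (i + 1) = μ}
  one_mem' := ⟨1, fun _ => by simp⟩
  mul_mem' := by
    rintro a b ⟨μ, ha⟩ ⟨ν, hb⟩
    exact ⟨μ * ν, fun i => by
      rw [Pi.mul_apply, Pi.mul_apply, mul_pow, mul_mul_mul_comm, ha i, hb i]⟩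
  inv_mem' := by
    rintro a ⟨μ, ha⟩
    exact ⟨μ⁻¹, fun i => by
      rw [Pi.inv_apply, Pi.inv_apply, inv_pow, ← mul_inv, ha i]⟩

open Fin.NatCast

namespace KleinAux

/-- partial geometric sums of ratio `1 - d` -/
def S (d j : ℕ) : ℤ := ∑ k ∈ Finset.range j, (1 - (d : ℤ)) ^ k

lemma S_zero (d : ℕ) : S d 0 = 0 := by simp [S]

lemma S_one (d : ℕ) : S d 1 = 1 := by simp [S]

lemma S_succ (d j : ℕ) : S d (j + 1) = S d j + (1 - (d : ℤ)) ^ j :=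
  Finset.sum_range_succ _ _

lemma dS (d j : ℕ) : (d : ℤ) * S d j = 1 - (1 - (d : ℤ)) ^ j := by
  have h := geom_sum_mul (1 - (d : ℤ)) j
  unfold S
  linear_combination -h

/-- the evaluation homomorphism `l ↦ l 0 / l 1` on the Klein diagonal group -/
def phi (n d : ℕ) : (KleinDiag n d) →* ℂˣ :=
  MonoidHom.mk' (fun x => (x : Fin (n + 2) → ℂˣ) 0 * ((x : Fin (n + 2) → ℂˣ) 1)⁻¹)
    (by
      intro a b
      simp only [Subgroup.coe_mul, Pi.mul_apply, mul_inv, mul_mul_mul_comm])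

lemma t_pow {n d : ℕ} (hd : 3 ≤ d) (l : Fin (n + 2) → ℂˣ) (μ : ℂˣ)
    (hl : ∀ i, l i ^ (d - 1) * l (i + 1) = μ) (j : ℕ) :
    l (j : Fin (n + 2)) * (l ((j : Fin (n + 2)) + 1))⁻¹
      = (l 0 * (l 1)⁻¹) ^ ((1 - (d : ℤ)) ^ j) := by
  induction j with
  | zero => simp
  | succ j ih =>
    have step : ∀ i : Fin (n + 2),
        l (i + 1) * (l (i + 1 + 1))⁻¹ = (l i * (l (i + 1))⁻¹) ^ ((1 : ℤ) - d) := by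
      intro i
      have key : (l i * (l (i + 1))⁻¹) ^ (d - 1) * (l (i + 1) * (l (i + 1 + 1))⁻¹) = 1 := by
        rw [mul_pow, inv_pow, mul_mul_mul_comm, ← mul_inv, hl i, hl (i + 1), mul_inv_cancel]
      have h2 := eq_inv_of_mul_eq_one_right key
      rw [h2, ← zpow_natCast, ← zpow_neg]
      congr 1
      omega
    have hc : ((j + 1 : ℕ) : Fin (n + 2)) = (j : Fin (n + 2)) + 1 := by push_cast; ring
    rw [hc, step, ih, ← zpow_mul, ← pow_succ]

lemma prod_zpow_sum (x : ℂˣ) (k : ℕ) (e : ℕ → ℤ) :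
    ∏ j ∈ Finset.range k, x ^ e j = x ^ ∑ j ∈ Finset.range k, e j := by
  induction k with
  | zero => simp
  | succ k ih => rw [Finset.prod_range_succ, Finset.sum_range_succ, ih, zpow_add]

lemma t_prod {n : ℕ} (l : Fin (n + 2) → ℂˣ) :
    ∏ i : Fin (n + 2), (l i * (l (i + 1))⁻¹) = 1 := by
  rw [Finset.prod_mul_distrib, Finset.prod_inv_distrib]
  have h := Fintype.prod_equiv (Equiv.addRight (1 : Fin (n + 2)))
    (fun i => l (i + 1)) l (fun i => rfl)
  rw [h, mul_inv_cancel]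

end KleinAux

theorem stmt_6 (n d m : ℕ) (hn : 1 ≤ n) (hd : 3 ≤ d)
    (hm : (d : ℤ) * m = ((d : ℤ) - 1) ^ (n + 2) - (-1 : ℤ) ^ (n + 2)) :
    IsCyclic (KleinDiag n d ⧸ ((constHom (n + 2)).range.subgroupOf (KleinDiag n d))) ∧
    Nat.card (KleinDiag n d ⧸ ((constHom (n + 2)).range.subgroupOf (KleinDiag n d))) = m := by
  classical
  open KleinAux in
  -- basic integer facts
  have hd0 : (d : ℤ) ≠ 0 := by positivity
  have hm0 : m ≠ 0 := by
    intro h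
    subst h
    have h1 : (2 : ℤ) ^ (n + 2) ≤ ((d : ℤ) - 1) ^ (n + 2) := by
      apply pow_le_pow_left₀ (by norm_num)
      have : (3 : ℤ) ≤ (d : ℤ) := by exact_mod_cast hd
      linarith
    have h2 : (8 : ℤ) ≤ 2 ^ (n + 2) := by
      calc (8 : ℤ) = 2 ^ 3 := by norm_num
      _ ≤ 2 ^ (n + 2) := pow_le_pow_right₀ (by norm_num) (by omega)
    rcases neg_one_pow_eq_or ℤ (n + 2) with h3 | h3 <;> rw [h3] at hm <;> push_cast at hm <;>
      linarith
  haveI : NeZero m := ⟨hm0⟩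
  -- the sum S d (n+2) is ±m
  have hS : KleinAux.S d (n + 2) = (-1 : ℤ) ^ (n + 1) * m := by
    apply mul_left_cancel₀ hd0
    rw [KleinAux.dS]
    have ha : ((-1 : ℤ) ^ (n + 1)) * ((-1 : ℤ) ^ (n + 1)) = 1 := by
      rcases neg_one_pow_eq_or ℤ (n + 1) with h | h <;> rw [h] <;> norm_num
    have hb : (1 - (d : ℤ)) ^ (n + 2) = (-1 : ℤ) ^ (n + 2) * ((d : ℤ) - 1) ^ (n + 2) := by
      rw [show (1 - (d : ℤ)) = -((d : ℤ) - 1) by ring, neg_pow]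
    linear_combination -hb - ((-1 : ℤ) ^ (n + 1)) * hm - ha
  -- criterion: x ^ S = 1 ↔ x ^ m = 1
  have habs : ∀ x : ℂˣ, x ^ KleinAux.S d (n + 2) = 1 ↔ x ^ m = 1 := by
    intro x
    rw [hS]
    rcases neg_one_pow_eq_or ℤ (n + 1) with h | h <;> rw [h]
    · rw [one_mul, zpow_natCast]
    · rw [neg_one_mul, zpow_neg, inv_eq_one, zpow_natCast]
  -- kernel of phi is the scalar subgroup
  have hker : (KleinAux.phi n d).ker = (constHom (n + 2)).range.subgroupOf (KleinDiag n d) := by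
    ext x
    rw [MonoidHom.mem_ker, Subgroup.mem_subgroupOf, MonoidHom.mem_range]
    constructor
    · intro hx
      have hx' : (x : Fin (n + 2) → ℂˣ) 0 * ((x : Fin (n + 2) → ℂˣ) 1)⁻¹ = 1 := hx
      obtain ⟨μ, hl⟩ := x.2
      have hconst : ∀ j : ℕ, (x : Fin (n + 2) → ℂˣ) (j : Fin (n + 2))
          = (x : Fin (n + 2) → ℂˣ) 0 := by
        intro j
        induction j with
        | zero => norm_num
        | succ j ih =>
          have h := KleinAux.t_pow hd _ μ hl j
          rw [hx', one_zpow] at h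
          have h2 : (x : Fin (n + 2) → ℂˣ) ((j : Fin (n + 2)) + 1)
              = (x : Fin (n + 2) → ℂˣ) (j : Fin (n + 2)) := (mul_inv_eq_one.mp h).symm
          have hc : ((j + 1 : ℕ) : Fin (n + 2)) = (j : Fin (n + 2)) + 1 := by push_cast; ring
          rw [hc, h2, ih]
      refine ⟨(x : Fin (n + 2) → ℂˣ) 0, ?_⟩
      funext i
      show (x : Fin (n + 2) → ℂˣ) 0 = (x : Fin (n + 2) → ℂˣ) i
      conv_rhs => rw [← Fin.cast_val_eq_self i]
      exact (hconst i.val).symm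
    · rintro ⟨c, hc⟩
      have h0 : (x : Fin (n + 2) → ℂˣ) 0 = c := by rw [← hc]; rfl
      have h1 : (x : Fin (n + 2) → ℂˣ) 1 = c := by rw [← hc]; rfl
      show (x : Fin (n + 2) → ℂˣ) 0 * ((x : Fin (n + 2) → ℂˣ) 1)⁻¹ = 1
      rw [h0, h1, mul_inv_cancel]
  -- range of phi is the group of m-th roots of unity
  have hrange : (KleinAux.phi n d).range = rootsOfUnity m ℂ := by
    ext t
    rw [MonoidHom.mem_range, mem_rootsOfUnity]
    constructor
    · rintro ⟨x, rfl⟩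
      obtain ⟨μ, hl⟩ := x.2
      have hprod := KleinAux.t_prod (x : Fin (n + 2) → ℂˣ)
      have h1 : ∀ i : Fin (n + 2), (x : Fin (n + 2) → ℂˣ) i
            * ((x : Fin (n + 2) → ℂˣ) (i + 1))⁻¹
          = ((x : Fin (n + 2) → ℂˣ) 0 * ((x : Fin (n + 2) → ℂˣ) 1)⁻¹)
            ^ ((1 - (d : ℤ)) ^ (i.val)) := by
        intro i
        conv_lhs => rw [← Fin.cast_val_eq_self i]
        exact KleinAux.t_pow hd _ μ hl i.val
      rw [Finset.prod_congr rfl (fun i _ => h1 i),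
        Fin.prod_univ_eq_prod_range
          (fun j => ((x : Fin (n + 2) → ℂˣ) 0 * ((x : Fin (n + 2) → ℂˣ) 1)⁻¹)
            ^ ((1 - (d : ℤ)) ^ j)) (n + 2),
        KleinAux.prod_zpow_sum] at hprod
      exact (habs _).mp hprod
    · intro ht
      refine ⟨⟨fun i => t ^ (-(KleinAux.S d i.val)), ⟨t⁻¹, ?_⟩⟩, ?_⟩
      · intro i
        show (t ^ (-(KleinAux.S d i.val))) ^ (d - 1) * t ^ (-(KleinAux.S d ((i + 1).val))) = t⁻¹
        rw [← zpow_natCast (t ^ (-(KleinAux.S d i.val))) (d - 1), ← zpow_mul, ← zpow_add]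
        have hd1 : ((d - 1 : ℕ) : ℤ) = (d : ℤ) - 1 := by omega
        rw [hd1]
        by_cases hi : i = Fin.last (n + 1)
        · subst hi
          rw [show (Fin.last (n + 1) + 1).val = 0 from by simp [Fin.val_add_one],
            Fin.val_last, KleinAux.S_zero]
          have hE : -(KleinAux.S d (n + 1)) * ((d : ℤ) - 1) + -(0 : ℤ)
              = KleinAux.S d (n + 2) + (-1) := by
            linear_combination -(KleinAux.dS d (n + 1)) - (KleinAux.S_succ d (n + 1))
          rw [hE, zpow_add, (habs t).mpr ht, one_mul, zpow_neg_one]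
        · have hv : (i + 1).val = i.val + 1 := by simp [Fin.val_add_one, hi]
          rw [hv]
          have hE : -(KleinAux.S d i.val) * ((d : ℤ) - 1) + -(KleinAux.S d (i.val + 1))
              = -1 := by
            linear_combination -(KleinAux.dS d i.val) - (KleinAux.S_succ d i.val)
          rw [hE, zpow_neg_one]
      · show t ^ (-(KleinAux.S d (0 : Fin (n + 2)).val))
            * (t ^ (-(KleinAux.S d (1 : Fin (n + 2)).val)))⁻¹ = t
        rw [Fin.val_zero, Fin.val_one, KleinAux.S_zero, KleinAux.S_one]
        simp
  -- assemble
  let E := ((QuotientGroup.quotientMulEquivOfEq hker).symm.trans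
    (QuotientGroup.quotientKerEquivRange (KleinAux.phi n d))).trans
    (MulEquiv.subgroupCongr hrange)
  refine ⟨isCyclic_of_surjective E.symm E.symm.surjective, ?_⟩
  rw [Nat.card_congr E.toEquiv, Complex.card_rootsOfUnity]
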